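/- Let (Y,d) be a metric space and K(t) ⊆ Y compact for each t ∈ [0,T]. Suppose Y is locally compact and for all s,t ∈ [0,T], K(t) ⊆ {y : dist(y, K(s)) ≤ |s-t|}. Then the union ⋃_{t ∈ [0,T]} K(t) is compact. -/

import Mathlib

open Set Metric

/-- If `Y` is a locally compact metric space, each `K(t)` is compact for
`t ∈ [0,T]`, and `K(t) ⊆ K(s)_{|s−t|}` (closed `|s−t|`-neighborhood), then
`⋃_{t ∈ [0,T]} K(t)` is compact. -/
theorem stmt2 {Y : Type*} [MetricSpace Y] [LocallyCompactSpace Y] (T : ℝ)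
    (K : ℝ → Set Y)
    (hK : ∀ t ∈ Icc (0:ℝ) T, IsCompact (K t))
    (hKsub : ∀ s ∈ Icc (0:ℝ) T, ∀ t ∈ Icc (0:ℝ) T,
      K t ⊆ Metric.cthickening |s - t| (K s)) :
    IsCompact (⋃ t ∈ Icc (0:ℝ) T, K t) := by
  classical
  -- Step 1: choose compact thickenings
  have h1 : ∀ t ∈ Icc (0:ℝ) T, ∃ δ > 0, IsCompact (Metric.cthickening δ (K t)) := by
    intro t ht
    obtain ⟨C, hC, hsub⟩ := exists_compact_superset (hK t ht)
    obtain ⟨δ, hδ, hsub2⟩ := (hK t ht).exists_cthickening_subset_open isOpen_interior hsub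
    exact ⟨δ, hδ, hC.of_isClosed_subset Metric.isClosed_cthickening
      (hsub2.trans interior_subset)⟩
  choose! δ hδpos hδcomp using h1
  -- Step 2: finite subcover of Icc by balls
  have hcover : Icc (0:ℝ) T ⊆ ⋃ t ∈ Icc (0:ℝ) T, Metric.ball t (δ t) := fun s hs =>
    mem_biUnion hs (Metric.mem_ball_self (hδpos s hs))
  obtain ⟨F, hFsub, hFfin, hF⟩ := isCompact_Icc.elim_finite_subcover_image
    (fun t _ => Metric.isOpen_ball) hcover
  -- the big compact set
  have hCcomp : IsCompact (⋃ t ∈ F, Metric.cthickening (δ t) (K t)) :=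
    hFfin.isCompact_biUnion (fun t ht => hδcomp t (hFsub ht))
  -- Step 3: the union is contained in the big compact set
  have hsub : (⋃ t ∈ Icc (0:ℝ) T, K t) ⊆ ⋃ t ∈ F, Metric.cthickening (δ t) (K t) := by
    intro y hy
    obtain ⟨s, hs, hys⟩ := mem_iUnion₂.1 hy
    obtain ⟨t, htF, hst⟩ := mem_iUnion₂.1 (hF hs)
    refine mem_biUnion htF ?_
    have h1 : K s ⊆ Metric.cthickening |t - s| (K t) := hKsub t (hFsub htF) s hs
    have h2 : Metric.cthickening |t - s| (K t) ⊆ Metric.cthickening (δ t) (K t) :=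
      Metric.cthickening_mono (le_of_lt (by simpa [Metric.mem_ball, dist_comm,
        Real.dist_eq, abs_sub_comm] using hst)) _
    exact h2 (h1 hys)
  -- Step 4: the union is closed
  have hclosed : IsClosed (⋃ t ∈ Icc (0:ℝ) T, K t) := by
    rw [← isSeqClosed_iff_isClosed]
    intro y p hy hlim
    have hmem : ∀ n, ∃ t ∈ Icc (0:ℝ) T, y n ∈ K t := fun n => by
      simpa using mem_iUnion₂.1 (hy n)
    choose τ hτ hyτ using hmem
    obtain ⟨t, ht, φ, hφ, hτlim⟩ := isCompact_Icc.tendsto_subseq hτ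
    have hplim : Filter.Tendsto (fun k => y (φ k)) Filter.atTop (nhds p) :=
      hlim.comp hφ.tendsto_atTop
    have hle : ∀ k, EMetric.infEdist (y (φ k)) (K t) ≤ ENNReal.ofReal |t - τ (φ k)| := by
      intro k
      have := hKsub t ht (τ (φ k)) (hτ (φ k)) (hyτ (φ k))
      exact Metric.mem_cthickening_iff.1 this
    have hinf : Filter.Tendsto (fun k => EMetric.infEdist (y (φ k)) (K t))
        Filter.atTop (nhds (EMetric.infEdist p (K t))) :=
      (EMetric.continuous_infEdist.tendsto p).comp hplim
    have hzero : Filter.Tendsto (fun k => ENNReal.ofReal |t - τ (φ k)|)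
        Filter.atTop (nhds 0) := by
      have h0 : Filter.Tendsto (fun k => |t - τ (φ k)|) Filter.atTop (nhds 0) := by
        have h := (continuous_abs.tendsto (0:ℝ)).comp
          (((tendsto_const_nhds (x := t)).sub hτlim).congr' (by rfl) |>.mono_right
            (by rw [sub_self]))
        simpa [Function.comp_def] using h
      simpa [Function.comp_def] using (ENNReal.continuous_ofReal.tendsto 0).comp h0
    have hfinal : EMetric.infEdist p (K t) ≤ 0 :=
      le_of_tendsto_of_tendsto hinf hzero (Filter.Eventually.of_forall hle)
    have hp : p ∈ closure (K t) :=
      EMetric.mem_closure_iff_infEdist_zero.2 (le_antisymm hfinal zero_le)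
    have : p ∈ K t := by
      rwa [(hK t ht).isClosed.closure_eq] at hp
    exact mem_biUnion ht this
  exact hCcomp.of_isClosed_subset hclosed hsub
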